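/- arXiv:2404.17750 — 5 statements merged into one kernel-verified Lean document; each statement's English description precedes it below -/
import Mathlib

section
/- Let 0 = b₀ < b₁ < … < bₙ < b_{n+1} = 1 and let A ∈ ℝ^{(n+1)×(n+1)} have entries A_{ij} = 1 − b_{max(i,j)−1} (i.e. A_{ij} = ∫₀¹ H(x−b_{i−1})H(x−b_{j−1})dx with a(x)=1). Then for every ξ ∈ ℝ^{n+1}: ξᵀAξ ≤ (n+1)|ξ|² and ξᵀAξ ≥ h_min · Σⱼ₌₀ⁿ (Σᵢ₌₀ʲ ξᵢ)² ≥ (h_min/4)|ξ|², where h_min = min_{1≤i≤n+1}(bᵢ − b_{i−1}). Consequently the spectral condition number of A is bounded by 4(n+1)/h_min. -/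
open Matrix

/-- Two-sided quadratic form bounds and the condition number estimate
`O(n · h_min⁻¹)` for the shallow ReLU stiffness matrix with `a ≡ 1`. -/
theorem stmt3 (n : ℕ) (b : ℕ → ℝ)
    (hb0 : b 0 = 0) (hbn : b (n + 1) = 1)
    (hmono : ∀ i ≤ n, b i < b (i + 1))
    (A : Matrix (Fin (n + 1)) (Fin (n + 1)) ℝ)
    (hA : ∀ i j : Fin (n + 1), A i j = 1 - b (max i.val j.val))
    (hmin : ℝ)
    (hhmin : hmin = ⨅ i : Fin (n + 1), (b (i.val + 1) - b i.val)) :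
    (∀ ξ : Fin (n + 1) → ℝ,
        ξ ⬝ᵥ A.mulVec ξ ≤ (n + 1) * ∑ i, (ξ i) ^ 2 ∧
        hmin * ∑ j : Fin (n + 1),
            (∑ i ∈ Finset.univ.filter (fun i : Fin (n + 1) => i ≤ j), ξ i) ^ 2
          ≤ ξ ⬝ᵥ A.mulVec ξ ∧
        hmin / 4 * ∑ i, (ξ i) ^ 2 ≤
          hmin * ∑ j : Fin (n + 1),
            (∑ i ∈ Finset.univ.filter (fun i : Fin (n + 1) => i ≤ j), ξ i) ^ 2 ∧
        hmin / 4 * ∑ i, (ξ i) ^ 2 ≤ ξ ⬝ᵥ A.mulVec ξ) ∧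
    (∀ lam : ℝ, Module.End.HasEigenvalue (Matrix.toLin' A) lam →
        hmin / 4 ≤ lam ∧ lam ≤ n + 1) ∧
    (∀ lam mu : ℝ, Module.End.HasEigenvalue (Matrix.toLin' A) lam →
        Module.End.HasEigenvalue (Matrix.toLin' A) mu →
        lam / mu ≤ 4 * (n + 1) / hmin) := by
  -- notation
  set h : Fin (n+1) → ℝ := fun k => b (k.val + 1) - b k.val with hh
  -- telescoping
  have tel : ∀ m : Fin (n+1),
      ∑ k : Fin (n+1), (if m ≤ k then b (k.val+1) - b k.val else 0) = 1 - b m.val := by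
    intro m
    have h1 : ∀ k : Fin (n+1), (if m ≤ k then b (k.val+1) - b k.val else 0)
        = (fun j : ℕ => if m.val ≤ j then b (j+1) - b j else 0) k.val := by
      intro k; simp only [Fin.le_def]
    rw [Finset.sum_congr rfl (fun k _ => h1 k),
      Fin.sum_univ_eq_sum_range (fun j : ℕ => if m.val ≤ j then b (j+1) - b j else 0)]
    rw [← Finset.sum_filter]
    have h2 : (Finset.range (n+1)).filter (fun j => m.val ≤ j) = Finset.Ico m.val (n+1) := by
      ext j; simp [Finset.mem_Ico, and_comm]
    rw [h2, Finset.sum_Ico_eq_sum_range]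
    have h3 := Finset.sum_range_sub (fun j => b (m.val + j)) (n + 1 - m.val)
    have hm : m.val + (n + 1 - m.val) = n + 1 := by omega
    calc ∑ j ∈ Finset.range (n+1-m.val), (b (m.val + j + 1) - b (m.val + j))
        = ∑ j ∈ Finset.range (n+1-m.val), (b (m.val + (j+1)) - b (m.val + j)) := by
          apply Finset.sum_congr rfl; intro j _; ring_nf
      _ = b (m.val + (n+1-m.val)) - b (m.val + 0) := h3
      _ = 1 - b m.val := by rw [hm, hbn]; norm_num
  -- key identity
  have key : ∀ ξ : Fin (n+1) → ℝ, ξ ⬝ᵥ A.mulVec ξ = ∑ k : Fin (n+1), h k *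
      (∑ i ∈ Finset.univ.filter (fun i : Fin (n+1) => i ≤ k), ξ i) ^ 2 := by
    intro ξ
    have RHS : ∀ k : Fin (n+1), h k *
        (∑ i ∈ Finset.univ.filter (fun i : Fin (n+1) => i ≤ k), ξ i) ^ 2
        = ∑ i : Fin (n+1), ∑ j : Fin (n+1),
          (if i ≤ k then ξ i else 0) * (if j ≤ k then ξ j else 0) * h k := by
      intro k
      rw [sq, Finset.sum_filter, Finset.sum_mul_sum]
      rw [Finset.mul_sum]
      apply Finset.sum_congr rfl; intro i _
      rw [Finset.mul_sum]
      apply Finset.sum_congr rfl; intro j _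
      ring
    rw [Finset.sum_congr rfl (fun k _ => RHS k)]
    rw [Finset.sum_comm]
    simp only [dotProduct, Matrix.mulVec, Finset.mul_sum]
    apply Finset.sum_congr rfl; intro i _
    rw [Finset.sum_comm]
    apply Finset.sum_congr rfl; intro j _
    have e1 : ∀ k : Fin (n+1),
        (if i ≤ k then ξ i else 0) * (if j ≤ k then ξ j else 0) * h k
        = ξ i * (ξ j * (if max i j ≤ k then b (k.val+1) - b k.val else 0)) := by
      intro k
      by_cases h1 : i ≤ k <;> by_cases h2 : j ≤ k <;>
        simp [hh, h1, h2, max_le_iff, *] <;> ring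
    rw [Finset.sum_congr rfl (fun k _ => e1 k), ← Finset.mul_sum, ← Finset.mul_sum, tel]
    rw [hA]
    have : ((max i j : Fin (n+1)) : ℕ) = max i.val j.val := rfl
    rw [this]
    ring
  -- positivity of each h and bounds on hmin
  have hpos : ∀ k : Fin (n+1), 0 < h k := by
    intro k
    have := hmono k.val (Nat.lt_succ_iff.mp k.isLt)
    simp [hh]; linarith
  obtain ⟨i0, hi0⟩ := Finite.exists_min (fun i : Fin (n+1) => b (i.val + 1) - b i.val)
  have hmin_eq : hmin = h i0 := by
    rw [hhmin]
    exact le_antisymm (ciInf_le ((Set.finite_range _).bddBelow) i0) (le_ciInf hi0)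
  have hminpos : 0 < hmin := hmin_eq ▸ hpos i0
  have hminle : ∀ k : Fin (n+1), hmin ≤ h k := fun k => hmin_eq ▸ hi0 k
  -- sum of h is 1
  have hsum : ∑ k : Fin (n+1), h k = 1 := by
    have e : ∀ k : Fin (n+1), h k
        = if (0 : Fin (n+1)) ≤ k then b (k.val+1) - b k.val else 0 := by
      intro k; simp [hh, Fin.zero_le]
    rw [Finset.sum_congr rfl (fun k _ => e k), tel]
    simp [hb0]
  have hle1 : ∀ k : Fin (n+1), h k ≤ 1 := by
    intro k
    rw [← hsum]
    exact Finset.single_le_sum (fun j _ => (hpos j).le) (Finset.mem_univ k)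
  have main : ∀ ξ : Fin (n + 1) → ℝ,
      ξ ⬝ᵥ A.mulVec ξ ≤ (n + 1) * ∑ i, (ξ i) ^ 2 ∧
      hmin * ∑ j : Fin (n + 1),
          (∑ i ∈ Finset.univ.filter (fun i : Fin (n + 1) => i ≤ j), ξ i) ^ 2
        ≤ ξ ⬝ᵥ A.mulVec ξ ∧
      hmin / 4 * ∑ i, (ξ i) ^ 2 ≤
        hmin * ∑ j : Fin (n + 1),
          (∑ i ∈ Finset.univ.filter (fun i : Fin (n + 1) => i ≤ j), ξ i) ^ 2 ∧
      hmin / 4 * ∑ i, (ξ i) ^ 2 ≤ ξ ⬝ᵥ A.mulVec ξ := by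
    intro ξ
    set s : Fin (n+1) → ℝ :=
      fun k => ∑ i ∈ Finset.univ.filter (fun i : Fin (n+1) => i ≤ k), ξ i with hs
    have sqnn : (0:ℝ) ≤ ∑ i, (ξ i)^2 := Finset.sum_nonneg fun i _ => sq_nonneg _
    -- Cauchy-Schwarz bound on each partial sum
    have cs : ∀ k : Fin (n+1), (s k)^2 ≤ (n+1) * ∑ i, (ξ i)^2 := by
      intro k
      calc (s k)^2 ≤ ((Finset.univ.filter (fun i : Fin (n+1) => i ≤ k)).card : ℝ) *
              ∑ i ∈ Finset.univ.filter (fun i : Fin (n+1) => i ≤ k), (ξ i)^2 :=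
            sq_sum_le_card_mul_sum_sq
        _ ≤ (n+1) * ∑ i, (ξ i)^2 := by
            apply mul_le_mul
            · have : (Finset.univ.filter (fun i : Fin (n+1) => i ≤ k)).card ≤ n+1 := by
                calc _ ≤ (Finset.univ : Finset (Fin (n+1))).card :=
                      Finset.card_le_card (Finset.filter_subset _ _)
                  _ = n+1 := by simp
              exact_mod_cast this
            · exact Finset.sum_le_sum_of_subset_of_nonneg (Finset.filter_subset _ _)
                (fun i _ _ => sq_nonneg _)
            · exact Finset.sum_nonneg fun i _ => sq_nonneg _
            · positivity
    have upper : ξ ⬝ᵥ A.mulVec ξ ≤ (n + 1) * ∑ i, (ξ i) ^ 2 := by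
      rw [key]
      calc ∑ k : Fin (n+1), h k * (s k)^2
          ≤ ∑ k : Fin (n+1), h k * ((n+1) * ∑ i, (ξ i)^2) :=
            Finset.sum_le_sum fun k _ =>
              mul_le_mul_of_nonneg_left (cs k) (hpos k).le
        _ = (∑ k : Fin (n+1), h k) * ((n+1) * ∑ i, (ξ i)^2) := by
            rw [Finset.sum_mul]
        _ = (n + 1) * ∑ i, (ξ i) ^ 2 := by rw [hsum, one_mul]
    have lower1 : hmin * ∑ j : Fin (n+1), (s j)^2 ≤ ξ ⬝ᵥ A.mulVec ξ := by
      rw [key, Finset.mul_sum]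
      exact Finset.sum_le_sum fun k _ =>
        mul_le_mul_of_nonneg_right (hminle k) (sq_nonneg _)
    -- discrete: ∑ ξ² ≤ 4 ∑ s²
    have lower2 : ∑ i, (ξ i)^2 ≤ 4 * ∑ j : Fin (n+1), (s j)^2 := by
      set η : ℕ → ℝ := fun i => if hi : i < n+1 then ξ ⟨i, hi⟩ else 0 with hη
      set S : ℕ → ℝ := fun k => ∑ i ∈ Finset.range k, η i with hS
      have hsS : ∀ k : Fin (n+1), s k = S (k.val + 1) := by
        intro k
        have e0 : s k = ∑ i ∈ Finset.univ.filter (fun i : Fin (n+1) => i ≤ k), ξ i := rfl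
        rw [e0, Finset.sum_filter]
        have e : ∀ i : Fin (n+1), (if i ≤ k then ξ i else 0)
            = (fun j : ℕ => if j ≤ k.val then η j else 0) i.val := by
          intro i
          simp only [Fin.le_def, hη, i.isLt, dif_pos]
        rw [Finset.sum_congr rfl (fun i _ => e i),
          Fin.sum_univ_eq_sum_range (fun j : ℕ => if j ≤ k.val then η j else 0)]
        rw [← Finset.sum_filter]
        have h2 : (Finset.range (n+1)).filter (fun j => j ≤ k.val)
            = Finset.range (k.val+1) := by
          ext j
          simp only [Finset.mem_filter, Finset.mem_range]
          constructor
          · rintro ⟨_, hj⟩; omega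
          · intro hj; have := k.isLt; omega
        rw [h2, hS]
      have hξη : ∑ i, (ξ i)^2 = ∑ i ∈ Finset.range (n+1), (η i)^2 := by
        rw [← Fin.sum_univ_eq_sum_range (fun j : ℕ => (η j)^2)]
        apply Finset.sum_congr rfl; intro i _
        simp only [hη, i.isLt, dif_pos]
      have hsη : ∑ j : Fin (n+1), (s j)^2 = ∑ k ∈ Finset.range (n+1), (S (k+1))^2 := by
        rw [← Fin.sum_univ_eq_sum_range (fun j : ℕ => (S (j+1))^2)]
        exact Finset.sum_congr rfl fun j _ => by rw [hsS j]
      rw [hξη, hsη]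
      have hstep : ∀ k, η k = S (k+1) - S k := by
        intro k
        simp [hS, Finset.sum_range_succ]
      have hS0 : S 0 = 0 := by simp [hS]
      have step1 : ∑ k ∈ Finset.range (n+1), (η k)^2
          ≤ ∑ k ∈ Finset.range (n+1), (2 * (S (k+1))^2 + 2 * (S k)^2) := by
        apply Finset.sum_le_sum
        intro k _
        rw [hstep k]
        nlinarith [sq_nonneg (S (k+1) + S k)]
      have step2 : ∑ k ∈ Finset.range (n+1), (S k)^2
          ≤ ∑ k ∈ Finset.range (n+1), (S (k+1))^2 := by
        rw [Finset.sum_range_succ' (fun k => (S k)^2) n, hS0]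
        simp only [ne_eq, OfNat.ofNat_ne_zero, not_false_eq_true, zero_pow, add_zero]
        exact Finset.sum_le_sum_of_subset_of_nonneg
          (Finset.range_subset_range.mpr (Nat.le_succ n)) (fun i _ _ => sq_nonneg _)
      have := Finset.sum_add_distrib (s := Finset.range (n+1))
        (f := fun k => 2 * (S (k+1))^2) (g := fun k => 2 * (S k)^2)
      rw [this] at step1
      rw [← Finset.mul_sum, ← Finset.mul_sum] at step1
      linarith
    have lower2' : hmin / 4 * ∑ i, (ξ i) ^ 2 ≤ hmin * ∑ j : Fin (n+1), (s j)^2 := by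
      have : hmin / 4 * ∑ i, (ξ i) ^ 2 ≤ hmin / 4 * (4 * ∑ j : Fin (n+1), (s j)^2) :=
        mul_le_mul_of_nonneg_left lower2 (by positivity)
      calc hmin / 4 * ∑ i, (ξ i) ^ 2 ≤ hmin / 4 * (4 * ∑ j : Fin (n+1), (s j)^2) := this
        _ = hmin * ∑ j : Fin (n+1), (s j)^2 := by ring
    exact ⟨upper, lower1, lower2', le_trans lower2' lower1⟩
  have eig : ∀ lam : ℝ, Module.End.HasEigenvalue (Matrix.toLin' A) lam →
      hmin / 4 ≤ lam ∧ lam ≤ n + 1 := by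
    intro lam hlam
    obtain ⟨v, hv⟩ := hlam.exists_hasEigenvector
    have hv0 : v ≠ 0 := hv.right
    have hav : A.mulVec v = lam • v := by
      have := hv.apply_eq_smul
      rwa [Matrix.toLin'_apply] at this
    have hvv : v ⬝ᵥ A.mulVec v = lam * ∑ i, (v i)^2 := by
      rw [hav]
      simp [dotProduct, Finset.mul_sum, sq]
      apply Finset.sum_congr rfl; intro i _; ring
    have hN : 0 < ∑ i, (v i)^2 := by
      obtain ⟨i, hi⟩ := Function.ne_iff.mp hv0
      exact Finset.sum_pos' (fun j _ => sq_nonneg _)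
        ⟨i, Finset.mem_univ i, lt_of_le_of_ne (sq_nonneg _) (Ne.symm (pow_ne_zero 2 hi))⟩
    obtain ⟨up0, -, -, low0⟩ := main v
    rw [hvv] at up0 low0
    constructor
    · exact le_of_mul_le_mul_right low0 hN
    · exact le_of_mul_le_mul_right up0 hN
  refine ⟨main, eig, ?_⟩
  intro lam mu hlam hmu
  obtain ⟨hl1, hl2⟩ := eig lam hlam
  obtain ⟨hm1, hm2⟩ := eig mu hmu
  have h4 : (0:ℝ) < hmin / 4 := by positivity
  have : lam / mu ≤ ((n:ℝ)+1) / (hmin/4) :=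
    div_le_div₀ (by positivity) hl2 h4 hm1
  have e : ((n:ℝ)+1) / (hmin/4) = 4*((n:ℝ)+1)/hmin := by
    rw [div_div_eq_mul_div]; ring
  linarith [e ▸ this]
end

section
/- With breakpoints 0 = b₀ < b₁ < … < bₙ < b_{n+1} = 1 and a(x) ≥ μ > 0 integrable, set sᵢ = ∫_{b_{i−1}}^{bᵢ} a(x)dx for i = 1,…,n+1 and let A be the (n+1)×(n+1) matrix with A_{ij} = ∫_{b_{max(i,j)−1}}^{1} a(x)dx. Then A is invertible and A⁻¹ is the symmetric tridiagonal matrix with diagonal entries (1/s₁, 1/s₁+1/s₂, …, 1/sₙ+1/s_{n+1}) and off-diagonal entries (A⁻¹)_{i,i+1} = −1/sᵢ. -/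
/-- The inverse of the shallow-Ritz stiffness matrix is the explicit symmetric
tridiagonal matrix built from `sᵢ = ∫_{b_{i−1}}^{bᵢ} a`. -/
theorem stmt4 (n : ℕ) (b : ℕ → ℝ) (a : ℝ → ℝ) (μ : ℝ) (hμ : 0 < μ)
    (ha : ∀ x ∈ Set.Icc (0 : ℝ) 1, μ ≤ a x)
    (haint : IntervalIntegrable a MeasureTheory.volume 0 1)
    (hb0 : b 0 = 0) (hbn : b (n + 1) = 1) (hmono : ∀ i ≤ n, b i < b (i + 1))
    (s : ℕ → ℝ) (hs : ∀ i : ℕ, s i = ∫ x in b (i - 1)..b i, a x)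
    (A T : Matrix (Fin (n + 1)) (Fin (n + 1)) ℝ)
    (hA : ∀ i j : Fin (n + 1), A i j = ∫ x in b (max i.val j.val)..1, a x)
    (hT : ∀ i j : Fin (n + 1), T i j =
      if i = j then (if i.val = 0 then 0 else (s i.val)⁻¹) + (s (i.val + 1))⁻¹
      else if i.val + 1 = j.val ∨ j.val + 1 = i.val then -(s (max i.val j.val))⁻¹
      else 0) :
    A * T = 1 ∧ T * A = 1 ∧ IsUnit A ∧ A⁻¹ = T := by
  classical
  -- monotonicity of b
  have hble : ∀ j, j ≤ n + 1 → ∀ i, i ≤ j → b i ≤ b j := by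
    intro j
    induction j with
    | zero => intro _ i hi; simp [Nat.le_zero.mp hi]
    | succ m ih =>
      intro hm i hi
      rcases Nat.eq_or_lt_of_le hi with h | h
      · simp [h]
      · exact le_of_lt (lt_of_le_of_lt (ih (by omega) i (by omega)) (hmono m (by omega)))
  have hbm : ∀ i, i ≤ n + 1 → b i ∈ Set.Icc (0 : ℝ) 1 := by
    intro i hi
    constructor
    · rw [← hb0]; exact hble i hi 0 (Nat.zero_le _)
    · rw [← hbn]; exact hble (n + 1) le_rfl i hi
  have huIcc : ∀ i, i ≤ n + 1 → b i ∈ Set.uIcc (0 : ℝ) 1 := by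
    intro i hi; rw [Set.uIcc_of_le zero_le_one]; exact hbm i hi
  have hint : ∀ i j, i ≤ n + 1 → j ≤ n + 1 →
      IntervalIntegrable a MeasureTheory.volume (b i) (b j) := by
    intro i j hi hj
    exact haint.mono_set (Set.uIcc_subset_uIcc (huIcc i hi) (huIcc j hj))
  have hint1 : ∀ i, i ≤ n + 1 → IntervalIntegrable a MeasureTheory.volume (b i) 1 := by
    intro i hi; have := hint i (n + 1) hi le_rfl; rwa [hbn] at this
  have hsval : ∀ m : ℕ, s (m + 1) = ∫ x in b m..b (m + 1), a x := by
    intro m; rw [hs]; simp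
  have hspos : ∀ m, m ≤ n → 0 < s (m + 1) := by
    intro m hm
    rw [hsval]
    apply intervalIntegral.intervalIntegral_pos_of_pos_on
      (hint m (m + 1) (by omega) (by omega))
    · intro x hx
      have h1 : (0 : ℝ) ≤ b m := (hbm m (by omega)).1
      have h2 : b (m + 1) ≤ 1 := (hbm (m + 1) (by omega)).2
      exact lt_of_lt_of_le hμ (ha x ⟨le_of_lt (lt_of_le_of_lt h1 hx.1),
        le_of_lt (lt_of_lt_of_le hx.2 h2)⟩)
    · exact hmono m hm
  have hF1 : ∀ m, m ≤ n →
      (∫ x in b m..1, a x) = s (m + 1) + ∫ x in b (m + 1)..1, a x := by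
    intro m hm
    rw [hsval]
    exact (intervalIntegral.integral_add_adjacent_intervals
      (hint m (m + 1) (by omega) (by omega)) (hint1 (m + 1) (by omega))).symm
  have hF2 : (∫ x in b n..1, a x) = s (n + 1) := by
    rw [hsval n, hbn]
  -- key computation
  have key : ∀ i j : Fin (n + 1), (A * T) i j = if i = j then 1 else 0 := by
    intro i j
    rw [Matrix.mul_apply]
    set g : ℕ → ℝ := fun k => if h : k < n + 1 then A i ⟨k, h⟩ * T ⟨k, h⟩ j else 0 with hg
    have hsum : (∑ k : Fin (n + 1), A i k * T k j) = ∑ k ∈ Finset.range (n + 1), g k := by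
      rw [← Fin.sum_univ_eq_sum_range]
      apply Finset.sum_congr rfl
      intro k _
      simp [hg, k.isLt]
      intro h; exact absurd k.isLt (by omega)
    rw [hsum]
    set vi := i.val with hvi
    set vj := j.val with hvj
    have hjlt : vj < n + 1 := j.isLt
    have hilt : vi < n + 1 := i.isLt
    -- terms with index far from j vanish
    have hg0 : ∀ k, k < n + 1 → ¬(k = vj) → ¬(k + 1 = vj) → ¬(vj + 1 = k) → g k = 0 := by
      intro k hk h1 h2 h3
      have hTz : T ⟨k, hk⟩ j = 0 := by
        rw [hT]
        rw [if_neg (by intro hc; exact h1 (by simpa [Fin.ext_iff] using hc)), if_neg]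
        rintro (hc | hc)
        · exact h2 hc
        · exact h3 hc
      simp [hg, dif_pos hk, hTz]
    -- diagonal, sub-, super-diagonal values of g
    have hgd : g vj = (∫ x in b (max vi vj)..1, a x) *
        ((if vj = 0 then 0 else (s vj)⁻¹) + (s (vj + 1))⁻¹) := by
      have h1 : g vj = A i j * T j j := by
        rw [show g vj = if h : vj < n + 1 then A i ⟨vj, h⟩ * T ⟨vj, h⟩ j else 0 from rfl,
          dif_pos hjlt, show (⟨vj, hjlt⟩ : Fin (n + 1)) = j from Fin.ext hvj]
      rw [h1, hA, hT, if_pos rfl]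
    have hgl : 1 ≤ vj → g (vj - 1) =
        (∫ x in b (max vi (vj - 1))..1, a x) * (-(s vj)⁻¹) := by
      intro c1
      have hk : vj - 1 < n + 1 := by omega
      have hTv : T ⟨vj - 1, hk⟩ j = -(s vj)⁻¹ := by
        rw [hT, if_neg (by simp only [Fin.ext_iff, Fin.val_mk]; try omega),
          if_pos (Or.inl (by simp only [Fin.val_mk]; try omega))]
        have : max (⟨vj - 1, hk⟩ : Fin (n + 1)).val j.val = vj := by
          simp only [Fin.val_mk]; try omega
        rw [this]
      simp only [hg, dif_pos hk, hA, hTv]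
      rfl
    have hgr : vj < n → g (vj + 1) =
        (∫ x in b (max vi (vj + 1))..1, a x) * (-(s (vj + 1))⁻¹) := by
      intro c2
      have hk : vj + 1 < n + 1 := by omega
      have hTv : T ⟨vj + 1, hk⟩ j = -(s (vj + 1))⁻¹ := by
        rw [hT, if_neg (by simp only [Fin.ext_iff, Fin.val_mk]; try omega),
          if_pos (Or.inr (by simp only [Fin.val_mk]; try omega))]
        have : max (⟨vj + 1, hk⟩ : Fin (n + 1)).val j.val = vj + 1 := by
          simp only [Fin.val_mk]; try omega
        rw [this]
      simp only [hg, dif_pos hk, hA, hTv]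
      rfl
    by_cases c1 : 1 ≤ vj <;> by_cases c2 : vj < n
    · -- interior: 1 ≤ vj < n
      have hS : (∑ k ∈ Finset.range (n + 1), g k)
          = ∑ k ∈ ({vj - 1, vj, vj + 1} : Finset ℕ), g k := by
        refine (Finset.sum_subset ?_ ?_).symm
        · intro x hx; simp at hx ⊢; try omega
        · intro x hx hx'
          simp at hx hx'
          exact hg0 x (by omega) (by omega) (by omega) (by omega)
      rw [hS, Finset.sum_insert (by simp; try omega), Finset.sum_insert (by simp; try omega),
        Finset.sum_singleton, hgl c1, hgd, hgr c2]
      have h1 : (∫ x in b (vj - 1)..1, a x) = s vj + ∫ x in b vj..1, a x := by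
        have := hF1 (vj - 1) (by omega)
        rwa [show vj - 1 + 1 = vj from by omega] at this
      have h2 : (∫ x in b vj..1, a x) = s (vj + 1) + ∫ x in b (vj + 1)..1, a x :=
        hF1 vj (by omega)
      have hs1 : s vj ≠ 0 := by
        have := hspos (vj - 1) (by omega)
        rw [show vj - 1 + 1 = vj from by omega] at this
        exact this.ne'
      have hs2 : s (vj + 1) ≠ 0 := (hspos vj (by omega)).ne'
      rw [if_neg (by omega : ¬vj = 0)]
      rcases lt_trichotomy vi vj with hij | hij | hij
      · rw [if_neg (by simp only [Fin.ext_iff]; omega),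
          show max vi (vj - 1) = vj - 1 from by omega,
          show max vi vj = vj from by omega,
          show max vi (vj + 1) = vj + 1 from by omega, h1, h2]
        field_simp
        ring
      · rw [if_pos (by exact Fin.ext hij),
          show max vi (vj - 1) = vj from by omega,
          show max vi vj = vj from by omega,
          show max vi (vj + 1) = vj + 1 from by omega, h2]
        field_simp
        ring
      · rw [if_neg (by simp only [Fin.ext_iff]; omega),
          show max vi (vj - 1) = vi from by omega,
          show max vi vj = vi from by omega,
          show max vi (vj + 1) = vi from by omega]
        ring
    · -- right edge: 1 ≤ vj = n
      have hvjn : vj = n := by omega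
      have hS : (∑ k ∈ Finset.range (n + 1), g k)
          = ∑ k ∈ ({vj - 1, vj} : Finset ℕ), g k := by
        refine (Finset.sum_subset ?_ ?_).symm
        · intro x hx; simp at hx ⊢; try omega
        · intro x hx hx'
          simp at hx hx'
          exact hg0 x (by omega) (by omega) (by omega) (by omega)
      rw [hS, Finset.sum_insert (by simp; try omega), Finset.sum_singleton, hgl c1, hgd]
      have h1 : (∫ x in b (vj - 1)..1, a x) = s vj + ∫ x in b vj..1, a x := by
        have := hF1 (vj - 1) (by omega)
        rwa [show vj - 1 + 1 = vj from by omega] at this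
      have h2 : (∫ x in b vj..1, a x) = s (vj + 1) := by rw [hvjn]; exact hF2
      have hs1 : s vj ≠ 0 := by
        have := hspos (vj - 1) (by omega)
        rw [show vj - 1 + 1 = vj from by omega] at this
        exact this.ne'
      have hs2 : s (vj + 1) ≠ 0 := by
        have := hspos n le_rfl; rw [← hvjn] at this; exact this.ne'
      rw [if_neg (by omega : ¬vj = 0)]
      rcases lt_trichotomy vi vj with hij | hij | hij
      · rw [if_neg (by simp only [Fin.ext_iff]; omega),
          show max vi (vj - 1) = vj - 1 from by omega,
          show max vi vj = vj from by omega, h1, h2]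
        field_simp
        ring
      · rw [if_pos (by exact Fin.ext hij),
          show max vi (vj - 1) = vj from by omega,
          show max vi vj = vj from by omega, h2]
        field_simp
        ring
      · omega
    · -- left edge: vj = 0 < n
      have hvj0 : vj = 0 := by omega
      have hS : (∑ k ∈ Finset.range (n + 1), g k)
          = ∑ k ∈ ({vj, vj + 1} : Finset ℕ), g k := by
        refine (Finset.sum_subset ?_ ?_).symm
        · intro x hx; simp at hx ⊢; try omega
        · intro x hx hx'
          simp at hx hx'
          exact hg0 x (by omega) (by omega) (by omega) (by omega)
      rw [hS, Finset.sum_insert (by simp), Finset.sum_singleton, hgd, hgr c2]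
      have h2 : (∫ x in b vj..1, a x) = s (vj + 1) + ∫ x in b (vj + 1)..1, a x :=
        hF1 vj (by omega)
      have hs2 : s (vj + 1) ≠ 0 := (hspos vj (by omega)).ne'
      rw [if_pos hvj0]
      rcases Nat.eq_zero_or_pos vi with hi0 | hi0
      · rw [if_pos (by exact Fin.ext (by omega)),
          show max vi vj = vj from by omega,
          show max vi (vj + 1) = vj + 1 from by omega, h2]
        field_simp
        ring
      · rw [if_neg (by simp only [Fin.ext_iff]; omega),
          show max vi vj = vi from by omega,
          show max vi (vj + 1) = vi from by omega]
        ring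
    · -- n = 0
      have hvj0 : vj = 0 := by omega
      have hn0 : n = 0 := by omega
      have hS : (∑ k ∈ Finset.range (n + 1), g k) = ∑ k ∈ ({vj} : Finset ℕ), g k := by
        refine (Finset.sum_subset ?_ ?_).symm
        · intro x hx; simp at hx ⊢; try omega
        · intro x hx hx'
          simp at hx hx'
          exact hg0 x (by omega) (by omega) (by omega) (by omega)
      rw [hS, Finset.sum_singleton, hgd]
      have h2 : (∫ x in b vj..1, a x) = s (vj + 1) := by
        rw [show vj = n from by omega]; exact hF2
      have hs2 : s (vj + 1) ≠ 0 := (hspos vj (by omega)).ne'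
      rw [if_pos hvj0, if_pos (by exact Fin.ext (by omega)),
        show max vi vj = vj from by omega, h2]
      field_simp
      ring
  have hAT : A * T = 1 := by
    ext i j
    rw [key i j, Matrix.one_apply]
  have hTA : T * A = 1 := mul_eq_one_comm.mp hAT
  exact ⟨hAT, hTA, ⟨⟨A, T, hAT, hTA⟩, rfl⟩, Matrix.inv_eq_right_inv hAT⟩
end

section
/- Let uₙ(x) = α + Σᵢ₌₀ⁿ cᵢσ(x−bᵢ) with ReLU σ and 0 = b₀ < b₁ < … < bₙ < 1. Then for each j ∈ {1,…,n}, the restriction of (uₙ′)² to (bⱼ, b_{j+1}) equals the constant (Σᵢ₌₀ʲ cᵢ)², and consequently ∂/∂bⱼ ∫₀¹ a(x)(uₙ′(x))² dx = −2cⱼ a(bⱼ)(Σᵢ₌₀^{j−1} cᵢ + cⱼ/2), assuming a is continuous at bⱼ. -/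
/-- `(uₙ′)²` is constant on each subinterval `(bⱼ, b_{j+1})`, and the derivative of the
energy `∫ a (uₙ′)²` with respect to the breakpoint `bⱼ` equals
`−2 cⱼ a(bⱼ)(Σ_{i<j} cᵢ + cⱼ/2)`. -/
theorem stmt6 (n : ℕ) (c b : ℕ → ℝ) (α : ℝ) (a : ℝ → ℝ) (μ : ℝ) (hμ : 0 < μ)
    (hab : ∀ x ∈ Set.Icc (0 : ℝ) 1, μ ≤ a x)
    (haint : IntervalIntegrable a MeasureTheory.volume 0 1)
    (hb0 : b 0 = 0) (hbn : b (n + 1) = 1) (hmono : ∀ i ≤ n, b i < b (i + 1))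
    (H : ℝ → ℝ) (hH : ∀ t, H t = if 0 < t then 1 else 0)
    (j : ℕ) (hj1 : 1 ≤ j) (hjn : j ≤ n) (hacont : ContinuousAt a (b j)) :
    (∀ x ∈ Set.Ioo (b j) (b (j + 1)),
        (∑ i ∈ Finset.range (n + 1), c i * H (x - b i)) ^ 2 =
          (∑ i ∈ Finset.range (j + 1), c i) ^ 2) ∧
    HasDerivAt
      (fun t => ∫ x in (0 : ℝ)..1,
          a x * (∑ i ∈ Finset.range (n + 1), c i * H (x - Function.update b j t i)) ^ 2)
      (-2 * c j * a (b j) * (∑ i ∈ Finset.range j, c i + c j / 2)) (b j) := by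
  -- basic facts about H
  have Hpos : ∀ s : ℝ, 0 < s → H s = 1 := fun s hs => by rw [hH, if_pos hs]
  have Hneg : ∀ s : ℝ, s ≤ 0 → H s = 0 := fun s hs => by
    rw [hH, if_neg (not_lt.mpr hs)]
  have Hvals : ∀ s : ℝ, H s = 0 ∨ H s = 1 := fun s => by
    rw [hH]; split <;> simp
  have Habs : ∀ s : ℝ, |H s| ≤ 1 := fun s => by rcases Hvals s with h | h <;> rw [h] <;> norm_num
  have hHm : Measurable H := by
    have hHe : H = fun t => if 0 < t then (1:ℝ) else 0 := funext hH
    rw [hHe]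
    exact Measurable.ite (measurableSet_lt measurable_const measurable_id)
      measurable_const measurable_const
  -- monotonicity of b
  have hle : ∀ k, k ≤ n + 1 → ∀ i, i ≤ k → b i ≤ b k := by
    intro k
    induction k with
    | zero => intro _ i hi; simp [Nat.le_zero.mp hi]
    | succ m ih =>
      intro hk i hi
      rcases Nat.eq_or_lt_of_le hi with rfl | h
      · exact le_rfl
      · exact (ih (by omega) i (by omega)).trans (hmono m (by omega)).le
  have hltk : ∀ k, k ≤ n + 1 → ∀ i, i < k → b i < b k := by
    intro k hk i hi
    cases k with
    | zero => omega
    | succ m => exact (hle m (by omega) i (by omega)).trans_lt (hmono m (by omega))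
  have hbj0 : 0 < b j := hb0 ▸ hltk j (by omega) 0 (by omega)
  have hbj1 : b j < 1 := hbn ▸ hltk (n+1) le_rfl j (by omega)
  have hbl0 : 0 ≤ b (j-1) := hb0 ▸ hle (j-1) (by omega) 0 (by omega)
  have hbr1 : b (j+1) ≤ 1 := hbn ▸ hle (n+1) le_rfl (j+1) (by omega)
  have hIoo : b j ∈ Set.Ioo (b (j-1)) (b (j+1)) :=
    ⟨hltk j (by omega) (j-1) (by omega), hltk (j+1) (by omega) j (by omega)⟩
  constructor
  · -- part 1
    intro x hx
    have hsum : ∑ i ∈ Finset.range (n+1), c i * H (x - b i)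
        = ∑ i ∈ Finset.range (j+1), c i := by
      rw [← Finset.sum_subset (Finset.range_subset_range.mpr (by omega : j + 1 ≤ n + 1))
        (fun i hi hni => ?_)]
      · refine Finset.sum_congr rfl fun i hi => ?_
        have hii := Finset.mem_range.mp hi
        have hib : b i ≤ b j := hle j (by omega) i (by omega)
        rw [Hpos (x - b i) (by have := hx.1; linarith), mul_one]
      · have hii := Finset.mem_range.mp hi
        have h1 : j + 1 ≤ i := by
          by_contra hcon
          exact hni (Finset.mem_range.mpr (by omega))
        have hbi : b (j+1) ≤ b i := hle i (by omega) (j+1) h1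
        rw [Hneg (x - b i) (by have := hx.2; linarith), mul_zero]
    rw [hsum]
  · -- part 2
    have hjmem : j ∈ Finset.range (n+1) := Finset.mem_range.mpr (by omega)
    set R : ℝ → ℝ := fun x => ∑ i ∈ (Finset.range (n+1)).erase j, c i * H (x - b i) with hRdef
    set Q : ℝ → ℝ := fun x => c j * (2 * R x + c j) with hQdef
    set Qc : ℝ := c j * (2 * (∑ i ∈ Finset.range j, c i) + c j) with hQcdef
    have hSdecomp : ∀ t x : ℝ,
        (∑ i ∈ Finset.range (n+1), c i * H (x - Function.update b j t i))
          = R x + c j * H (x - t) := by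
      intro t x
      rw [← Finset.sum_erase_add _ _ hjmem, Function.update_self]
      congr 1
      exact Finset.sum_congr rfl fun i hi => by
        rw [Function.update_of_ne (Finset.ne_of_mem_erase hi)]
    have hsq : ∀ t x : ℝ, (R x + c j * H (x - t))^2 = R x ^ 2 + H (x - t) * Q x := by
      intro t x
      rcases Hvals (x - t) with h | h <;> rw [h] <;> simp only [hQdef] <;> ring
    -- bounds
    set CR : ℝ := ∑ i ∈ (Finset.range (n+1)).erase j, |c i| with hCRdef
    have hRb : ∀ x, |R x| ≤ CR := by
      intro x
      refine (Finset.abs_sum_le_sum_abs _ _).trans (Finset.sum_le_sum fun i _ => ?_)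
      rw [abs_mul]
      calc |c i| * |H (x - b i)| ≤ |c i| * 1 :=
            mul_le_mul_of_nonneg_left (Habs _) (abs_nonneg _)
        _ = |c i| := mul_one _
    have hCR0 : 0 ≤ CR := le_trans (abs_nonneg _) (hRb 0)
    have hRm : Measurable R :=
      Finset.measurable_sum _ fun i _ =>
        measurable_const.mul (hHm.comp (measurable_id.sub measurable_const))
    have hQm : Measurable Q := measurable_const.mul ((measurable_const.mul hRm).add measurable_const)
    have hQb : ∀ x, |Q x| ≤ |c j| * (2 * CR + |c j|) := by
      intro x
      rw [hQdef, abs_mul]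
      refine mul_le_mul_of_nonneg_left ?_ (abs_nonneg _)
      calc |2 * R x + c j| ≤ |2 * R x| + |c j| := abs_add_le _ _
        _ = 2 * |R x| + |c j| := by rw [abs_mul]; norm_num
        _ ≤ 2 * CR + |c j| := by have := hRb x; linarith
    -- integrability helper
    have hbdd : ∀ g : ℝ → ℝ, Measurable g → (∃ C, ∀ x, |g x| ≤ C) →
        IntervalIntegrable (fun x => a x * g x) MeasureTheory.volume 0 1 := by
      rintro g hg ⟨C, hC⟩
      constructor
      · have h1 := MeasureTheory.Integrable.bdd_mul haint.1 hg.aestronglyMeasurable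
          (c := C) (Filter.Eventually.of_forall fun x => by simpa [Real.norm_eq_abs] using hC x)
        exact h1.congr (Filter.Eventually.of_forall fun x => mul_comm _ _)
      · rw [Set.Ioc_eq_empty (by norm_num : ¬(1:ℝ) < 0)]
        exact MeasureTheory.integrableOn_empty
    have hint1 : IntervalIntegrable (fun x => a x * R x ^ 2) MeasureTheory.volume 0 1 := by
      refine hbdd _ (hRm.pow_const 2) ⟨CR ^ 2, fun x => ?_⟩
      rw [abs_pow]
      exact pow_le_pow_left₀ (abs_nonneg _) (hRb x) 2
    have hintQ : IntervalIntegrable (fun x => a x * Q x) MeasureTheory.volume 0 1 :=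
      hbdd _ hQm ⟨_, hQb⟩
    have hintHQ : ∀ t : ℝ, IntervalIntegrable (fun x => a x * (H (x - t) * Q x))
        MeasureTheory.volume 0 1 := by
      intro t
      refine hbdd _ ((hHm.comp (measurable_id.sub measurable_const)).mul hQm)
        ⟨|c j| * (2 * CR + |c j|), fun x => ?_⟩
      rw [abs_mul]
      calc |H (x - t)| * |Q x| ≤ 1 * |Q x| :=
            mul_le_mul_of_nonneg_right (Habs _) (abs_nonneg _)
        _ = |Q x| := one_mul _
        _ ≤ _ := hQb x
    -- Q is constant on the neighbourhood
    have hQconst : ∀ x ∈ Set.Ioo (b (j-1)) (b (j+1)), Q x = Qc := by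
      intro x hx
      have hsub : Finset.range j ⊆ (Finset.range (n+1)).erase j := by
        intro i hi
        have := Finset.mem_range.mp hi
        exact Finset.mem_erase.mpr ⟨by omega, Finset.mem_range.mpr (by omega)⟩
      have hRx : R x = ∑ i ∈ Finset.range j, c i := by
        show (∑ i ∈ (Finset.range (n+1)).erase j, c i * H (x - b i)) = _
        rw [← Finset.sum_subset hsub (fun i hi hni => ?_)]
        · refine Finset.sum_congr rfl fun i hi => ?_
          have hij : i < j := Finset.mem_range.mp hi
          have hib : b i ≤ b (j-1) := hle (j-1) (by omega) i (by omega)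
          rw [Hpos (x - b i) (by have := hx.1; linarith), mul_one]
        · have hi1 := (Finset.mem_erase.mp hi).1
          have hi2 := Finset.mem_range.mp (Finset.mem_erase.mp hi).2
          have hni' : ¬ i < j := fun h => hni (Finset.mem_range.mpr h)
          have hbi : b (j+1) ≤ b i := hle i (by omega) (j+1) (by omega)
          rw [Hneg (x - b i) (by have := hx.2; linarith), mul_zero]
      simp only [hQdef, hQcdef]; rw [hRx]
    -- the key pointwise formula for the energy
    have hFeq : ∀ t ∈ Set.Ioo (b (j-1)) (b (j+1)),
        (∫ x in (0:ℝ)..1,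
            a x * (∑ i ∈ Finset.range (n + 1), c i * H (x - Function.update b j t i)) ^ 2)
          = ((∫ x in (0:ℝ)..1, a x * R x ^ 2) + ∫ x in (b j)..1, a x * Q x)
              - Qc * ∫ x in (b j)..t, a x := by
      intro t ht
      have ht0 : 0 < t := lt_of_le_of_lt hbl0 ht.1
      have ht1 : t < 1 := lt_of_lt_of_le ht.2 hbr1
      have huIcc : ∀ u v : ℝ, 0 ≤ u → u ≤ 1 → 0 ≤ v → v ≤ 1 →
          Set.uIcc u v ⊆ Set.uIcc (0:ℝ) 1 := by
        intro u v h1 h2 h3 h4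
        exact Set.uIcc_subset_uIcc (by rw [Set.uIcc_of_le zero_le_one]; exact ⟨h1, h2⟩)
          (by rw [Set.uIcc_of_le zero_le_one]; exact ⟨h3, h4⟩)
      have step1 : (∫ x in (0:ℝ)..1,
            a x * (∑ i ∈ Finset.range (n + 1), c i * H (x - Function.update b j t i)) ^ 2)
          = (∫ x in (0:ℝ)..1, a x * R x ^ 2) + ∫ x in (0:ℝ)..1, a x * (H (x - t) * Q x) := by
        rw [← intervalIntegral.integral_add hint1 (hintHQ t)]
        refine intervalIntegral.integral_congr fun x _ => ?_
        rw [hSdecomp t x, hsq t x, mul_add]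
      have step2 : (∫ x in (0:ℝ)..1, a x * (H (x - t) * Q x))
          = ∫ x in t..1, a x * Q x := by
        have hadj := intervalIntegral.integral_add_adjacent_intervals
          ((hintHQ t).mono_set (huIcc 0 t le_rfl zero_le_one ht0.le ht1.le))
          ((hintHQ t).mono_set (huIcc t 1 ht0.le ht1.le zero_le_one le_rfl))
        rw [← hadj]
        have hz : (∫ x in (0:ℝ)..t, a x * (H (x - t) * Q x)) = 0 := by
          rw [intervalIntegral.integral_congr (g := fun _ => (0:ℝ)) fun x hx => ?_,
            intervalIntegral.integral_zero]
          rw [Set.uIcc_of_le ht0.le] at hx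
          rw [Hneg (x - t) (by have := hx.2; linarith)]
          ring
        have he : (∫ x in t..1, a x * (H (x - t) * Q x)) = ∫ x in t..1, a x * Q x := by
          refine intervalIntegral.integral_congr_ae (Filter.Eventually.of_forall fun x hx => ?_)
          rw [Set.uIoc_of_le ht1.le] at hx
          rw [Hpos (x - t) (by have := hx.1; linarith), one_mul]
        rw [hz, he, zero_add]
      have hsubIcc : Set.uIcc (b j) t ⊆ Set.Ioo (b (j-1)) (b (j+1)) := by
        intro x hx
        rcases Set.mem_uIcc.mp hx with ⟨h1, h2⟩ | ⟨h1, h2⟩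
        · exact ⟨lt_of_lt_of_le hIoo.1 h1, lt_of_le_of_lt h2 ht.2⟩
        · exact ⟨lt_of_lt_of_le ht.1 h1, lt_of_le_of_lt h2 hIoo.2⟩
      have step3 : (∫ x in t..1, a x * Q x)
          = (∫ x in (b j)..1, a x * Q x) - Qc * ∫ x in (b j)..t, a x := by
        have hbj01 : 0 ≤ b j := hbj0.le
        have hadj := intervalIntegral.integral_add_adjacent_intervals
          (hintQ.mono_set (huIcc t (b j) ht0.le ht1.le hbj01 hbj1.le))
          (hintQ.mono_set (huIcc (b j) 1 hbj01 hbj1.le zero_le_one le_rfl))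
        rw [← hadj, intervalIntegral.integral_symm (b j) t]
        have hc : (∫ x in (b j)..t, a x * Q x) = Qc * ∫ x in (b j)..t, a x := by
          rw [← intervalIntegral.integral_const_mul]
          refine intervalIntegral.integral_congr fun x hx => ?_
          rw [hQconst x (hsubIcc hx)]
          ring
        rw [hc]; ring
      rw [step1, step2, step3]; ring
    -- the derivative
    have hmeasf : StronglyMeasurableAtFilter a (nhds (b j)) :=
      ⟨Set.Ioo 0 1, isOpen_Ioo.mem_nhds ⟨hbj0, hbj1⟩,
        haint.1.aestronglyMeasurable.mono_measure
          (MeasureTheory.Measure.restrict_mono Set.Ioo_subset_Ioc_self le_rfl)⟩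
    have hrefl : IntervalIntegrable a MeasureTheory.volume (b j) (b j) := by
      constructor <;> (rw [Set.Ioc_self]; exact MeasureTheory.integrableOn_empty)
    have hfa : HasDerivAt (fun u => ∫ x in (b j)..u, a x) (a (b j)) (b j) :=
      intervalIntegral.integral_hasDerivAt_right hrefl hmeasf hacont
    have hG : HasDerivAt
        (fun t => ((∫ x in (0:ℝ)..1, a x * R x ^ 2) + ∫ x in (b j)..1, a x * Q x)
            - Qc * ∫ x in (b j)..t, a x)
        (-(Qc * a (b j))) (b j) :=
      (hfa.const_mul Qc).const_sub _
    have hev : (fun t => ∫ x in (0 : ℝ)..1,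
          a x * (∑ i ∈ Finset.range (n + 1), c i * H (x - Function.update b j t i)) ^ 2)
        =ᶠ[nhds (b j)] (fun t => ((∫ x in (0:ℝ)..1, a x * R x ^ 2)
            + ∫ x in (b j)..1, a x * Q x) - Qc * ∫ x in (b j)..t, a x) :=
      Filter.eventuallyEq_of_mem (isOpen_Ioo.mem_nhds hIoo) fun t ht => hFeq t ht
    have hval : -2 * c j * a (b j) * (∑ i ∈ Finset.range j, c i + c j / 2)
        = -(Qc * a (b j)) := by rw [hQcdef]; ring
    rw [hval]
    exact hG.congr_of_eventuallyEq hev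
end

section
/- Let 0 = b₀ < b₁ < … < bₙ < b_{n+1} = 1 and a(x) ≥ μ > 0 integrable. Then the smallest eigenvalue of the stiffness matrix A with A_{ij} = ∫_{b_{max(i,j)−1}}^1 a(x)dx satisfies λ_min(A) ≥ μ·h_min/4, where h_min = minᵢ(bᵢ − b_{i−1}); in particular A is positive definite and invertible. -/
open Finset MeasureTheory

/-- Lower eigenvalue bound `λ_min(A) ≥ μ h_min / 4` for the stiffness matrix; in
particular `A` is positive definite and invertible. -/
theorem stmt15 (n : ℕ) (b : ℕ → ℝ) (a : ℝ → ℝ) (μ : ℝ) (hμ : 0 < μ)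
    (ha : ∀ x ∈ Set.Icc (0 : ℝ) 1, μ ≤ a x)
    (haint : IntervalIntegrable a MeasureTheory.volume 0 1)
    (hb0 : b 0 = 0) (hbn : b (n + 1) = 1) (hmono : ∀ i ≤ n, b i < b (i + 1))
    (A : Matrix (Fin (n + 1)) (Fin (n + 1)) ℝ)
    (hA : ∀ i j : Fin (n + 1), A i j = ∫ x in b (max i.val j.val)..1, a x)
    (hmin : ℝ) (hhmin : hmin = ⨅ i : Fin (n + 1), (b (i.val + 1) - b i.val)) :
    (∀ lam : ℝ, Module.End.HasEigenvalue (Matrix.toLin' A) lam → μ * hmin / 4 ≤ lam) ∧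
    A.PosDef ∧ IsUnit A := by
  -- monotonicity of `b`
  have hble : ∀ j, j ≤ n + 1 → ∀ i, i ≤ j → b i ≤ b j := by
    intro j
    induction j with
    | zero => intro _ i hi; simp [Nat.le_zero.mp hi]
    | succ m ih =>
      intro hj i hi
      rcases eq_or_lt_of_le hi with h | h
      · simp [h]
      · exact le_trans (ih (le_trans (Nat.le_succ _) hj) i (Nat.lt_succ_iff.mp h))
          (hmono m (Nat.succ_le_succ_iff.mp hj)).le
  -- integrability on subintervals
  have hint : ∀ k, k ≤ n → IntervalIntegrable a MeasureTheory.volume (b k) (b (k+1)) := by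
    intro k hk
    apply haint.mono_set
    rw [Set.uIcc_of_le (hmono k hk).le, Set.uIcc_of_le (by norm_num : (0:ℝ) ≤ 1)]
    exact Set.Icc_subset_Icc
      (hb0 ▸ hble k (le_trans hk (Nat.le_succ _)) 0 (Nat.zero_le _))
      (hbn ▸ hble (n+1) le_rfl (k+1) (Nat.succ_le_succ hk))
  -- hmin bounds
  have hbdd : BddBelow (Set.range fun i : Fin (n+1) => b (i.val + 1) - b i.val) :=
    (Set.finite_range _).bddBelow
  have hminle : ∀ k : Fin (n + 1), hmin ≤ b (k.val + 1) - b k.val := by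
    intro k; rw [hhmin]; exact ciInf_le hbdd k
  have hminpos : 0 < hmin := by
    rw [hhmin]
    have hpos : ∀ i : Fin (n+1), 0 < b (i.val + 1) - b i.val := by
      intro i; have := hmono i.val (Nat.lt_succ_iff.mp i.isLt); linarith
    obtain ⟨i₀, _, hi₀⟩ := Finset.exists_min_image Finset.univ
      (fun i : Fin (n+1) => b (i.val + 1) - b i.val) ⟨0, Finset.mem_univ 0⟩
    calc (0:ℝ) < b (i₀.val + 1) - b i₀.val := hpos i₀
      _ ≤ ⨅ i : Fin (n+1), (b (i.val + 1) - b i.val) :=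
        le_ciInf fun i => hi₀ i (Finset.mem_univ i)
  have hμh : 0 < μ * hmin := mul_pos hμ hminpos
  -- the local integrals
  set c : ℕ → ℝ := fun k => ∫ x in b k..b (k+1), a x with hc
  have hck : ∀ k, k ≤ n → μ * hmin ≤ c k := by
    intro k hk
    have hle : b k ≤ b (k+1) := (hmono k hk).le
    have h1 : μ * (b (k+1) - b k) ≤ c k := by
      have := intervalIntegral.integral_mono_on hle
        (intervalIntegrable_const (c := μ)) (hint k hk)
        (fun x hx => ha x ⟨le_trans (hb0 ▸ hble k (le_trans hk (Nat.le_succ _)) 0 (Nat.zero_le _)) hx.1,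
          le_trans hx.2 (hbn ▸ hble (n+1) le_rfl (k+1) (Nat.succ_le_succ hk))⟩)
      simpa [mul_comm] using this
    have h2 : μ * hmin ≤ μ * (b (k+1) - b k) :=
      mul_le_mul_of_nonneg_left (hminle ⟨k, Nat.lt_succ_of_le hk⟩) hμ.le
    linarith
  -- entries as sums of local integrals
  have hAsum : ∀ i j : Fin (n + 1), A i j =
      ∑ k ∈ Finset.range (n+1), if i.val ≤ k ∧ j.val ≤ k then c k else 0 := by
    intro i j
    have hmn : max i.val j.val ≤ n := by
      have := Nat.lt_succ_iff.mp i.isLt; have := Nat.lt_succ_iff.mp j.isLt; omega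
    have htel : ∑ k ∈ Finset.Ico (max i.val j.val) (n+1), c k
        = ∫ x in b (max i.val j.val)..b (n+1), a x :=
      intervalIntegral.sum_integral_adjacent_intervals_Ico (le_trans hmn (Nat.le_succ _))
        (fun k hk => hint k (Nat.lt_succ_iff.mp (Set.mem_Ico.mp hk).2))
    rw [hA, ← hbn, ← htel,
      show Finset.Ico (max i.val j.val) (n+1)
        = (Finset.range (n+1)).filter (fun k => max i.val j.val ≤ k) by
        ext k; simp [Finset.mem_filter, Finset.mem_Ico, and_comm],
      Finset.sum_filter]
    exact Finset.sum_congr rfl fun k _ => if_congr max_le_iff rfl rfl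
  -- partial sums
  have key : ∀ ξ : Fin (n+1) → ℝ,
      μ * hmin / 4 * (∑ i, ξ i ^ 2) ≤ dotProduct ξ (A.mulVec ξ) := by
    intro ξ
    set S : ℕ → ℝ := fun k => ∑ i : Fin (n+1), if i.val ≤ k then ξ i else 0 with hS
    -- quadratic form identity
    have hQ : dotProduct ξ (A.mulVec ξ) = ∑ k ∈ Finset.range (n+1), c k * S k ^ 2 := by
      have step1 : dotProduct ξ (A.mulVec ξ) = ∑ i, ∑ j, ξ i * (A i j * ξ j) := by
        simp [dotProduct, Matrix.mulVec, Finset.mul_sum]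
      have step2 : ∀ i j : Fin (n+1), ξ i * (A i j * ξ j) =
          ∑ k ∈ Finset.range (n+1),
            (if i.val ≤ k then ξ i else 0) * (if j.val ≤ k then ξ j else 0) * c k := by
        intro i j
        rw [hAsum, Finset.sum_mul, Finset.mul_sum]
        refine Finset.sum_congr rfl fun k _ => ?_
        by_cases h1 : i.val ≤ k <;> by_cases h2 : j.val ≤ k <;> simp [h1, h2] <;> ring
      rw [step1]
      simp only [step2]
      rw [Finset.sum_congr rfl fun i (_ : i ∈ Finset.univ) =>
        (Finset.sum_comm (s := Finset.univ) (t := Finset.range (n+1))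
          (f := fun j k => (if i.val ≤ k then ξ i else 0) * (if j.val ≤ k then ξ j else 0) * c k)),
        Finset.sum_comm]
      refine Finset.sum_congr rfl fun k _ => ?_
      have e : ∑ i : Fin (n+1), ∑ j : Fin (n+1),
          (if i.val ≤ k then ξ i else 0) * (if j.val ≤ k then ξ j else 0) * c k
          = (∑ i : Fin (n+1), ∑ j : Fin (n+1),
            (if i.val ≤ k then ξ i else 0) * (if j.val ≤ k then ξ j else 0)) * c k := by
        rw [Finset.sum_mul]
        exact Finset.sum_congr rfl fun i _ => (Finset.sum_mul _ _ _).symm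
      rw [e, ← Finset.sum_mul_sum]
      show S k * S k * c k = c k * S k ^ 2
      ring
    -- the 1/4 inequality
    have hS4 : ∑ i : Fin (n+1), ξ i ^ 2 ≤ 4 * ∑ k ∈ Finset.range (n+1), S k ^ 2 := by
      set S' : ℕ → ℝ := fun k => ∑ i : Fin (n+1), if i.val < k then ξ i else 0 with hS'
      have hS'succ : ∀ k, S' (k+1) = S k := by
        intro k; simp [hS', hS, Nat.lt_succ_iff]
      have hS'0 : S' 0 = 0 := by simp [hS']
      have hxi : ∀ k (h : k < n+1), ξ ⟨k, h⟩ = S' (k+1) - S' k := by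
        intro k h
        have expand : ∀ i : Fin (n+1), (if i.val < k+1 then ξ i else 0)
            = (if i.val < k then ξ i else 0) + (if i = ⟨k, h⟩ then ξ i else 0) := by
          intro i
          rcases Nat.lt_trichotomy i.val k with h1 | h1 | h1
          · have e1 : i.val < k + 1 := by omega
            have e3 : i ≠ ⟨k, h⟩ := by rw [Ne, Fin.ext_iff]; exact Nat.ne_of_lt h1
            simp [e1, h1, e3]
          · have e3 : i = ⟨k, h⟩ := by rw [Fin.ext_iff]; exact h1
            have e2 : ¬ (i.val < k) := by omega
            simp [h1, e2, e3]
          · have e1 : ¬ (i.val < k + 1) := by omega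
            have e2 : ¬ (i.val < k) := by omega
            have e3 : i ≠ ⟨k, h⟩ := by rw [Ne, Fin.ext_iff]; simp; omega
            simp [e1, e2, e3]
        have : S' (k+1) = S' k + ξ ⟨k, h⟩ := by
          show (∑ i : Fin (n+1), if i.val < k+1 then ξ i else 0)
            = (∑ i : Fin (n+1), if i.val < k then ξ i else 0) + ξ ⟨k, h⟩
          rw [Finset.sum_congr rfl fun i _ => expand i, Finset.sum_add_distrib,
            Finset.sum_ite_eq' Finset.univ (⟨k, h⟩ : Fin (n+1)) ξ]
          simp
        linarith [this]
      have hsum : ∑ i : Fin (n+1), ξ i ^ 2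
          = ∑ k ∈ Finset.range (n+1), (S' (k+1) - S' k) ^ 2 := by
        rw [Finset.sum_range fun k => (S' (k+1) - S' k)^2]
        exact Finset.sum_congr rfl fun i _ => by rw [← hxi i.val i.isLt]
      have hbound : ∑ k ∈ Finset.range (n+1), (S' (k+1) - S' k) ^ 2
          ≤ ∑ k ∈ Finset.range (n+1), (2 * S' (k+1) ^ 2 + 2 * S' k ^ 2) :=
        Finset.sum_le_sum fun k _ => by nlinarith [sq_nonneg (S' (k+1) + S' k)]
      have hsplit : ∑ k ∈ Finset.range (n+1), (2 * S' (k+1) ^ 2 + 2 * S' k ^ 2)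
          ≤ 4 * ∑ k ∈ Finset.range (n+1), S k ^ 2 := by
        rw [Finset.sum_add_distrib]
        have e1 : ∑ k ∈ Finset.range (n+1), 2 * S' (k+1) ^ 2
            = 2 * ∑ k ∈ Finset.range (n+1), S k ^ 2 := by
          rw [Finset.mul_sum]; exact Finset.sum_congr rfl fun k _ => by rw [hS'succ]
        have e2 : ∑ k ∈ Finset.range (n+1), 2 * S' k ^ 2
            ≤ 2 * ∑ k ∈ Finset.range (n+1), S k ^ 2 := by
          rw [Finset.sum_range_succ' (fun k => 2 * S' k ^ 2) n, hS'0]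
          rw [Finset.mul_sum]
          have : ∑ k ∈ Finset.range n, 2 * S' (k+1) ^ 2
              = ∑ k ∈ Finset.range n, 2 * S k ^ 2 :=
            Finset.sum_congr rfl fun k _ => by rw [hS'succ]
          rw [this]
          have : ∑ k ∈ Finset.range n, 2 * S k ^ 2 ≤ ∑ k ∈ Finset.range (n+1), 2 * S k ^ 2 :=
            Finset.sum_le_sum_of_subset_of_nonneg
              (Finset.range_subset_range.mpr (Nat.le_succ _)) (fun k _ _ => by positivity)
          calc ∑ k ∈ Finset.range n, 2 * S k ^ 2 + 2 * 0 ^ 2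
              = ∑ k ∈ Finset.range n, 2 * S k ^ 2 := by norm_num
            _ ≤ ∑ k ∈ Finset.range (n+1), 2 * S k ^ 2 := this
        linarith [e1, e2]
      linarith [hsum ▸ le_trans hbound hsplit]
    -- combine
    have hlow : μ * hmin * ∑ k ∈ Finset.range (n+1), S k ^ 2
        ≤ ∑ k ∈ Finset.range (n+1), c k * S k ^ 2 := by
      rw [Finset.mul_sum]
      exact Finset.sum_le_sum fun k hk =>
        mul_le_mul_of_nonneg_right (hck k (Nat.lt_succ_iff.mp (Finset.mem_range.mp hk)))
          (sq_nonneg _)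
    rw [hQ]
    calc μ * hmin / 4 * (∑ i, ξ i ^ 2)
        ≤ μ * hmin / 4 * (4 * ∑ k ∈ Finset.range (n+1), S k ^ 2) :=
          mul_le_mul_of_nonneg_left hS4 (by positivity)
      _ = μ * hmin * ∑ k ∈ Finset.range (n+1), S k ^ 2 := by ring
      _ ≤ ∑ k ∈ Finset.range (n+1), c k * S k ^ 2 := hlow
  -- positive definiteness
  have hposdef : A.PosDef := by
    rw [Matrix.posDef_iff_dotProduct_mulVec]
    constructor
    · ext i j
      simp only [Matrix.conjTranspose_apply, hA, star_trivial, max_comm]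
    · intro x hx
      obtain ⟨i, hi⟩ := Function.ne_iff.mp hx
      have hsq : 0 < ∑ i, x i ^ 2 :=
        Finset.sum_pos' (fun i _ => sq_nonneg _)
          ⟨i, Finset.mem_univ i, pow_two_pos_of_ne_zero hi⟩
      have hst : star x = x := by simp
      rw [hst]
      calc (0:ℝ) < μ * hmin / 4 * ∑ i, x i ^ 2 :=
            mul_pos (div_pos hμh (by norm_num)) hsq
        _ ≤ dotProduct x (A.mulVec x) := key x
  refine ⟨?_, hposdef, hposdef.isUnit⟩
  intro lam hl
  obtain ⟨v, hv⟩ := hl.exists_hasEigenvector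
  have hv0 : v ≠ 0 := hv.right
  have happ : A.mulVec v = lam • v := by
    have := hv.apply_eq_smul
    rwa [Matrix.toLin'_apply] at this
  have hsq : 0 < ∑ i, v i ^ 2 :=
    Finset.sum_pos' (fun i _ => sq_nonneg _)
      (by obtain ⟨i, hi⟩ := Function.ne_iff.mp hv0
          exact ⟨i, Finset.mem_univ i, pow_two_pos_of_ne_zero hi⟩)
  have hdot : dotProduct v (A.mulVec v) = lam * ∑ i, v i ^ 2 := by
    rw [happ]
    simp [dotProduct, Finset.mul_sum, sq, mul_comm, mul_left_comm]
  have := key v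
  rw [hdot] at this
  exact le_of_mul_le_mul_right (by linarith [this]) hsq
end

section
/- For 0 = b₀ < b₁ < … < bₙ < b_{n+1} = 1 and a(x) = 1, the quadratic form of the stiffness matrix decomposes exactly as ξᵀAξ = Σⱼ₌₀ⁿ h_{j+1}(Σᵢ₌₀ʲ ξᵢ)², where hⱼ = bⱼ − b_{j−1} and A_{ij} = 1 − b_{max(i,j)−1}. -/
open Matrix

/-- Exact decomposition of the stiffness quadratic form:
`ξᵀAξ = Σⱼ h_{j+1} (Σ_{i≤j} ξᵢ)²`. -/
theorem stmt19 (n : ℕ) (b : ℕ → ℝ)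
    (hb0 : b 0 = 0) (hbn : b (n + 1) = 1) (hmono : ∀ i ≤ n, b i < b (i + 1))
    (A : Matrix (Fin (n + 1)) (Fin (n + 1)) ℝ)
    (hA : ∀ i j : Fin (n + 1), A i j = 1 - b (max i.val j.val))
    (ξ : Fin (n + 1) → ℝ) :
    ξ ⬝ᵥ A.mulVec ξ = ∑ j : Fin (n + 1),
      (b (j.val + 1) - b j.val) *
        (∑ i ∈ Finset.univ.filter (fun i : Fin (n + 1) => i ≤ j), ξ i) ^ 2 := by
  have key : ∀ m : ℕ, m ≤ n →
      (∑ k : Fin (n+1), (if m ≤ k.val then b (k.val+1) - b k.val else 0)) = 1 - b m := by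
    intro m hm
    rw [Fin.sum_univ_eq_sum_range (fun k => if m ≤ k then b (k+1) - b k else 0)]
    rw [← Finset.sum_filter]
    have : (Finset.range (n+1)).filter (fun k => m ≤ k) = Finset.Ico m (n+1) := by
      ext k; simp [Finset.mem_filter, Finset.mem_range, Finset.mem_Ico]; omega
    rw [this, Finset.sum_Ico_eq_sub _ (by omega),
      Finset.sum_range_sub (fun k => b k), Finset.sum_range_sub (fun k => b k), hbn, hb0]
    ring
  calc ξ ⬝ᵥ A.mulVec ξ
      = ∑ i : Fin (n+1), ∑ j : Fin (n+1), ξ i * ξ j * (1 - b (max i.val j.val)) := by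
        simp only [dotProduct, Matrix.mulVec, hA, Finset.mul_sum]
        exact Finset.sum_congr rfl fun i _ => Finset.sum_congr rfl fun j _ => by ring
    _ = ∑ i : Fin (n+1), ∑ j : Fin (n+1), ∑ k : Fin (n+1),
          ξ i * ξ j * (if max i.val j.val ≤ k.val then b (k.val+1) - b k.val else 0) := by
        refine Finset.sum_congr rfl fun i _ => Finset.sum_congr rfl fun j _ => ?_
        rw [← Finset.mul_sum, key (max i.val j.val) (by
          have := i.isLt; have := j.isLt; omega)]
    _ = ∑ k : Fin (n+1), ∑ i : Fin (n+1), ∑ j : Fin (n+1),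
          ξ i * ξ j * (if max i.val j.val ≤ k.val then b (k.val+1) - b k.val else 0) := by
        have e1 : ∀ i : Fin (n+1),
            (∑ j : Fin (n+1), ∑ k : Fin (n+1),
              ξ i * ξ j * (if max i.val j.val ≤ k.val then b (k.val+1) - b k.val else 0))
            = ∑ k : Fin (n+1), ∑ j : Fin (n+1),
              ξ i * ξ j * (if max i.val j.val ≤ k.val then b (k.val+1) - b k.val else 0) :=
          fun i => Finset.sum_comm
        rw [Finset.sum_congr rfl fun i _ => e1 i, Finset.sum_comm]
    _ = ∑ k : Fin (n+1), (b (k.val+1) - b k.val) *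
          (∑ i : Fin (n+1), if i.val ≤ k.val then ξ i else 0) ^ 2 := by
        refine Finset.sum_congr rfl fun k _ => ?_
        rw [sq, Finset.sum_mul_sum, Finset.mul_sum]
        simp only [Finset.mul_sum]
        refine Finset.sum_congr rfl fun i _ => Finset.sum_congr rfl fun j _ => ?_
        simp only [sup_le_iff]
        split_ifs <;> simp_all <;> ring
    _ = ∑ j : Fin (n + 1), (b (j.val + 1) - b j.val) *
          (∑ i ∈ Finset.univ.filter (fun i : Fin (n + 1) => i ≤ j), ξ i) ^ 2 := by
        refine Finset.sum_congr rfl fun k _ => ?_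
        rw [Finset.sum_filter]
        simp only [Fin.le_def]
end
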